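/- Let (C, C₋, C₊) be a Reedy category, let Γ be any one of the categories ∫N(C), ∫N^{-,+}(C), ∫N^{--,+}_+(C), Down_*(C), Down(C), and let last : Γ → C be the associated last-component functor. Then for all categories D, all functors F, G : C → D, and every natural transformation ε : F ∘ last ⇒ G ∘ last, there exists a unique natural transformation ε̃ : F ⇒ G with ε̃ ▷ last = ε (whiskering of ε̃ with last). -/

import Mathlib

namespace ReedyPaper

open CategoryTheory

universe v₂ u₂ v₁ u₁ v u

variable {C : Type u} [Category.{v} C]

def IsIdMor {x y : C} (f : x ⟶ y) : Prop := ∃ h : x = y, f = eqToHom h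

structure ReedyStruct (C : Type u) [Category.{v} C] where
  neg : MorphismProperty C
  pos : MorphismProperty C
  neg_id : ∀ x : C, neg (𝟙 x)
  pos_id : ∀ x : C, pos (𝟙 x)
  neg_comp : ∀ {x y z : C} (f : x ⟶ y) (g : y ⟶ z), neg f → neg g → neg (f ≫ g)
  pos_comp : ∀ {x y z : C} (f : x ⟶ y) (g : y ⟶ z), pos f → pos g → pos (f ≫ g)
  factor_existsUnique : ∀ {x y : C} (f : x ⟶ y),
    ∃! t : Σ z : C, (x ⟶ z) × (z ⟶ y), neg t.2.1 ∧ pos t.2.2 ∧ t.2.1 ≫ t.2.2 = f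
  wf : WellFounded (fun x y : C =>
    (∃ f : x ⟶ y, pos f ∧ ¬ IsIdMor f) ∨ (∃ f : y ⟶ x, neg f ∧ ¬ IsIdMor f))

structure ChainObj (C : Type u) [Category.{v} C] where
  n : ℕ
  X : Fin (n + 1) ⥤ C

structure ChainHom (P Q : ChainObj C) where
  α : Fin (P.n + 1) →o Fin (Q.n + 1)
  θ : ∀ i : Fin (P.n + 1), P.X.obj i ⟶ Q.X.obj (α i)
  natural : ∀ {i j : Fin (P.n + 1)} (h : i ≤ j),
    P.X.map (homOfLE h) ≫ θ j = θ i ≫ Q.X.map (homOfLE (α.monotone h))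

theorem ChainHom.ext' {P Q : ChainObj C} {f g : ChainHom P Q}
    (hα : f.α = g.α) (hθ : HEq f.θ g.θ) : f = g := by
  cases f; cases g; cases hα; cases hθ; rfl

def ChainHom.id (P : ChainObj C) : ChainHom P P where
  α := OrderHom.id
  θ i := 𝟙 _
  natural h := by
    change P.X.map (homOfLE h) ≫ 𝟙 _ = 𝟙 _ ≫ P.X.map (homOfLE h)
    simp

def ChainHom.comp {P Q S : ChainObj C} (f : ChainHom P Q) (g : ChainHom Q S) :
    ChainHom P S where
  α := g.α.comp f.α
  θ i := f.θ i ≫ g.θ (f.α i)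
  natural {i j} h := by
    show P.X.map (homOfLE h) ≫ f.θ j ≫ g.θ (f.α j) =
      (f.θ i ≫ g.θ (f.α i)) ≫ S.X.map (homOfLE (g.α.monotone (f.α.monotone h)))
    rw [← Category.assoc, f.natural h, Category.assoc, g.natural (f.α.monotone h),
      ← Category.assoc]

instance : Category (ChainObj C) where
  Hom := ChainHom
  id := ChainHom.id
  comp := ChainHom.comp
  id_comp f := ChainHom.ext' rfl (heq_of_eq (funext fun i => Category.id_comp _))
  comp_id f := ChainHom.ext' rfl (heq_of_eq (funext fun i => Category.comp_id _))
  assoc f g h := ChainHom.ext' rfl (heq_of_eq (funext fun i => Category.assoc _ _ _))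

/-- The partial order on the hom-sets of `∫N(C)` (and of `∫N^{-,+}(C)`):
`(α, θ) ≤ (α', θ')` iff `α ≤ α'` pointwise and `θ'ᵢ = Y(α(i) ≤ α'(i)) ∘ θᵢ` for all `i`. -/
def ChainHom.le {P Q : ChainObj C} (f g : ChainHom P Q) : Prop :=
  (∀ i, f.α i ≤ g.α i) ∧
    ∀ (i : Fin (P.n + 1)) (h : f.α i ≤ g.α i), g.θ i = f.θ i ≫ Q.X.map (homOfLE h)

theorem ChainHom.le_comp_right {P Q S : ChainObj C} {f f' : P ⟶ Q} (g : Q ⟶ S)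
    (h : ChainHom.le f f') : ChainHom.le (f ≫ g) (f' ≫ g) := by
  refine ⟨fun i => g.α.monotone (h.1 i), fun i hi => ?_⟩
  show f'.θ i ≫ g.θ (f'.α i) = (f.θ i ≫ g.θ (f.α i)) ≫ S.X.map (homOfLE hi)
  rw [h.2 i (h.1 i), Category.assoc, g.natural (h.1 i), ← Category.assoc]
  rfl

theorem ChainHom.le_comp_left {P Q S : ChainObj C} (f : P ⟶ Q) {g g' : Q ⟶ S}
    (h : ChainHom.le g g') : ChainHom.le (f ≫ g) (f ≫ g') := by
  refine ⟨fun i => h.1 (f.α i), fun i hi => ?_⟩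
  show f.θ i ≫ g'.θ (f.α i) = (f.θ i ≫ g.θ (f.α i)) ≫ S.X.map (homOfLE hi)
  rw [h.2 (f.α i) (h.1 (f.α i)), ← Category.assoc]
  rfl

/-- Objects of `∫N^{-,+}(C)`: chains all of whose morphisms lie in `C₋`. -/
structure NegObj (R : ReedyStruct C) where
  n : ℕ
  X : Fin (n + 1) ⥤ C
  negMap : ∀ {i j : Fin (n + 1)} (h : i ≤ j), R.neg (X.map (homOfLE h))

variable {R : ReedyStruct C}

/-- The underlying object of `∫N(C)`. -/
def NegObj.chain (P : NegObj R) : ChainObj C := ⟨P.n, P.X⟩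

/-- Morphisms of `∫N^{-,+}(C)`: morphisms of `∫N(C)` all of whose components lie in `C₊`. -/
def NegHomT (P Q : NegObj R) : Type v :=
  { f : P.chain ⟶ Q.chain // ∀ i, R.pos (f.θ i) }

def NegHomT.id (P : NegObj R) : NegHomT P P := ⟨𝟙 P.chain, fun _ => R.pos_id _⟩

def NegHomT.comp {P Q S : NegObj R} (f : NegHomT P Q) (g : NegHomT Q S) : NegHomT P S :=
  ⟨f.1 ≫ g.1, fun i => by
    show R.pos (f.1.θ i ≫ g.1.θ (f.1.α i))
    exact R.pos_comp _ _ (f.2 i) (g.2 _)⟩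

theorem NegHomT.id_comp {P Q : NegObj R} (f : NegHomT P Q) : (NegHomT.id P).comp f = f := by
  apply Subtype.ext
  show 𝟙 P.chain ≫ f.1 = f.1
  exact Category.id_comp f.1

theorem NegHomT.comp_id {P Q : NegObj R} (f : NegHomT P Q) : f.comp (NegHomT.id Q) = f := by
  apply Subtype.ext
  show f.1 ≫ 𝟙 Q.chain = f.1
  exact Category.comp_id f.1

theorem NegHomT.comp_assoc {P Q S T : NegObj R} (f : NegHomT P Q) (g : NegHomT Q S)
    (h : NegHomT S T) : (f.comp g).comp h = f.comp (g.comp h) := by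
  apply Subtype.ext
  show (f.1 ≫ g.1) ≫ h.1 = f.1 ≫ (g.1 ≫ h.1)
  exact Category.assoc f.1 g.1 h.1

/-- The category `∫N^{-,+}(C)`. -/
instance : Category (NegObj R) where
  Hom := NegHomT
  id := NegHomT.id
  comp := NegHomT.comp
  id_comp := NegHomT.id_comp
  comp_id := NegHomT.comp_id
  assoc := NegHomT.comp_assoc

/-- The order on the hom-sets of `∫N^{-,+}(C)`. -/
def NegHom.le {P Q : NegObj R} (f g : P ⟶ Q) : Prop := ChainHom.le f.1 g.1

/-- The equivalence relation `∼` on the hom-sets of `∫N^{-,+}(C)`: the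
symmetric-transitive closure of `≤`. -/
def NegHom.equiv {P Q : NegObj R} (f g : P ⟶ Q) : Prop :=
  Relation.EqvGen (fun a b : P ⟶ Q => NegHom.le a b) f g

theorem NegHom.le_comp_right {P Q S : NegObj R} {f f' : P ⟶ Q} (g : Q ⟶ S)
    (h : NegHom.le f f') : NegHom.le (f ≫ g) (f' ≫ g) :=
  ChainHom.le_comp_right g.1 h

theorem NegHom.le_comp_left {P Q S : NegObj R} (f : P ⟶ Q) {g g' : Q ⟶ S}
    (h : NegHom.le g g') : NegHom.le (f ≫ g) (f ≫ g') :=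
  ChainHom.le_comp_left f.1 h

/-- Identity-reflectingness of a chain. -/
def NegObj.IdRefl (P : NegObj R) : Prop :=
  ∀ {i j : Fin (P.n + 1)} (h : i ≤ j), IsIdMor (P.X.map (homOfLE h)) → i = j

/-- Objects of `∫N^{--,+}_+(C)`: identity-reflecting chains in `C₋`. -/
structure StrictObj (R : ReedyStruct C) where
  toNegObj : NegObj R
  idRefl : toNegObj.IdRefl

/-- Morphisms of `∫N^{--,+}_+(C)`: morphisms of `∫N^{-,+}(C)` with `α` injective. -/
def StrictHomT (P Q : StrictObj R) : Type v :=
  { f : P.toNegObj ⟶ Q.toNegObj // Function.Injective f.1.α }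

def StrictHomT.id (P : StrictObj R) : StrictHomT P P :=
  ⟨𝟙 P.toNegObj, fun _ _ h => h⟩

def StrictHomT.comp {P Q S : StrictObj R} (f : StrictHomT P Q) (g : StrictHomT Q S) :
    StrictHomT P S :=
  ⟨f.1 ≫ g.1, fun _ _ h => f.2 (g.2 h)⟩

/-- The category `∫N^{--,+}_+(C)`. -/
instance : Category (StrictObj R) where
  Hom := StrictHomT
  id := StrictHomT.id
  comp := StrictHomT.comp
  id_comp f := Subtype.ext (Category.id_comp f.1)
  comp_id f := Subtype.ext (Category.comp_id f.1)
  assoc f g h := Subtype.ext (Category.assoc f.1 g.1 h.1)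

/-- The order on the hom-sets of `∫N^{--,+}_+(C)`. -/
def StrictHom.le {P Q : StrictObj R} (f g : P ⟶ Q) : Prop := NegHom.le f.1 g.1

/-- The equivalence relation `∼` on the hom-sets of `∫N^{--,+}_+(C)`. -/
def StrictHom.equiv {P Q : StrictObj R} (f g : P ⟶ Q) : Prop :=
  Relation.EqvGen (fun a b : P ⟶ Q => StrictHom.le a b) f g

theorem StrictHom.le_comp_right {P Q S : StrictObj R} {f f' : P ⟶ Q} (g : Q ⟶ S)
    (h : StrictHom.le f f') : StrictHom.le (f ≫ g) (f' ≫ g) :=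
  NegHom.le_comp_right g.1 h

theorem StrictHom.le_comp_left {P Q S : StrictObj R} (f : P ⟶ Q) {g g' : Q ⟶ S}
    (h : StrictHom.le g g') : StrictHom.le (f ≫ g) (f ≫ g') :=
  NegHom.le_comp_left f.1 h

/-- Objects of `Down_*(C)`: the same as those of `∫N^{-,+}(C)`. -/
structure DownStar (R : ReedyStruct C) where
  obj : NegObj R

/-- The category `Down_*(C)`: hom-sets are the quotients of those of `∫N^{-,+}(C)`
by the symmetric-transitive closure of `≤`. -/
instance : Category (DownStar R) where
  Hom P Q := Quot (fun f g : P.obj ⟶ Q.obj => NegHom.le f g)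
  id P := Quot.mk _ (𝟙 P.obj)
  comp {P Q S} f g :=
    Quot.lift
      (fun f' => Quot.lift (fun g' => Quot.mk _ (f' ≫ g'))
        (fun _ _ hg => Quot.sound (NegHom.le_comp_left f' hg)) g)
      (fun f₁ f₂ hf => Quot.inductionOn g (fun g' =>
        Quot.sound (NegHom.le_comp_right g' hf))) f
  id_comp f := Quot.inductionOn f fun f' => congrArg (Quot.mk _) (Category.id_comp f')
  comp_id f := Quot.inductionOn f fun f' => congrArg (Quot.mk _) (Category.comp_id f')
  assoc f g h :=
    Quot.inductionOn f fun f' => Quot.inductionOn g fun g' => Quot.inductionOn h fun h' =>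
      congrArg (Quot.mk _) (Category.assoc f' g' h')

/-- Objects of `Down(C)`: the same as those of `∫N^{--,+}_+(C)`. -/
structure Down (R : ReedyStruct C) where
  obj : StrictObj R

/-- The category `Down(C)`: hom-sets are the quotients of those of `∫N^{--,+}_+(C)`
by the symmetric-transitive closure of `≤`. -/
instance : Category (Down R) where
  Hom P Q := Quot (fun f g : P.obj ⟶ Q.obj => StrictHom.le f g)
  id P := Quot.mk _ (𝟙 P.obj)
  comp {P Q S} f g :=
    Quot.lift
      (fun f' => Quot.lift (fun g' => Quot.mk _ (f' ≫ g'))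
        (fun _ _ hg => Quot.sound (StrictHom.le_comp_left f' hg)) g)
      (fun f₁ f₂ hf => Quot.inductionOn g (fun g' =>
        Quot.sound (StrictHom.le_comp_right g' hf))) f
  id_comp f := Quot.inductionOn f fun f' => congrArg (Quot.mk _) (Category.id_comp f')
  comp_id f := Quot.inductionOn f fun f' => congrArg (Quot.mk _) (Category.comp_id f')
  assoc f g h :=
    Quot.inductionOn f fun f' => Quot.inductionOn g fun g' => Quot.inductionOn h fun h' =>
      congrArg (Quot.mk _) (Category.assoc f' g' h')

/-- The quotient functor `∫N^{-,+}(C) → Down_*(C)`. -/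
def qStar (R : ReedyStruct C) : NegObj R ⥤ DownStar R where
  obj P := ⟨P⟩
  map f := Quot.mk _ f
  map_id _ := rfl
  map_comp _ _ := rfl

/-- The inclusion functor `Down(C) → Down_*(C)`. -/
def downInclusion (R : ReedyStruct C) : Down R ⥤ DownStar R where
  obj P := ⟨P.obj.toNegObj⟩
  map {P Q} f :=
    Quot.lift (fun f' : P.obj ⟶ Q.obj => Quot.mk _ f'.1) (fun _ _ h => Quot.sound h) f
  map_id _ := rfl
  map_comp {P Q S} f g := by
    induction f using Quot.ind
    induction g using Quot.ind
    rfl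

/-- The last-component functor `∫N(C) → C`. -/
def lastChain : ChainObj C ⥤ C where
  obj P := P.X.obj (Fin.last P.n)
  map {P Q} f := f.θ (Fin.last P.n) ≫ Q.X.map (homOfLE (Fin.le_last (f.α (Fin.last P.n))))
  map_id P := by
    show 𝟙 (P.X.obj (Fin.last P.n)) ≫ P.X.map (homOfLE (Fin.le_last (Fin.last P.n))) = 𝟙 _
    rw [Category.id_comp]
    exact P.X.map_id _
  map_comp {P Q S} f g := by
    show (f.θ (Fin.last P.n) ≫ g.θ (f.α (Fin.last P.n))) ≫
        S.X.map (homOfLE (Fin.le_last (g.α (f.α (Fin.last P.n))))) =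
      (f.θ (Fin.last P.n) ≫ Q.X.map (homOfLE (Fin.le_last (f.α (Fin.last P.n))))) ≫
        g.θ (Fin.last Q.n) ≫ S.X.map (homOfLE (Fin.le_last (g.α (Fin.last Q.n))))
    rw [Category.assoc, Category.assoc, ← Category.assoc (Q.X.map _),
      g.natural (Fin.le_last (f.α (Fin.last P.n))), Category.assoc, ← Functor.map_comp,
      homOfLE_comp]

theorem lastChain_eq_of_le {P Q : ChainObj C} {f g : P ⟶ Q} (h : ChainHom.le f g) :
    lastChain.map f = lastChain.map g := by
  show f.θ (Fin.last P.n) ≫ Q.X.map (homOfLE (Fin.le_last (f.α (Fin.last P.n)))) =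
    g.θ (Fin.last P.n) ≫ Q.X.map (homOfLE (Fin.le_last (g.α (Fin.last P.n))))
  rw [h.2 (Fin.last P.n) (h.1 (Fin.last P.n)), Category.assoc, ← Functor.map_comp,
    homOfLE_comp]

/-- The forgetful functor `∫N^{-,+}(C) → ∫N(C)`. -/
def negForget (R : ReedyStruct C) : NegObj R ⥤ ChainObj C where
  obj P := P.chain
  map f := f.1
  map_id _ := rfl
  map_comp _ _ := rfl

/-- The last-component functor `∫N^{-,+}(C) → C`. -/
def lastNeg (R : ReedyStruct C) : NegObj R ⥤ C := negForget R ⋙ lastChain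

/-- The forgetful functor `∫N^{--,+}_+(C) → ∫N^{-,+}(C)`. -/
def strictForget (R : ReedyStruct C) : StrictObj R ⥤ NegObj R where
  obj P := P.toNegObj
  map f := f.1
  map_id _ := rfl
  map_comp _ _ := rfl

/-- The last-component functor `∫N^{--,+}_+(C) → C`. -/
def lastStrict (R : ReedyStruct C) : StrictObj R ⥤ C := strictForget R ⋙ lastNeg R

/-- The last-component functor `Down_*(C) → C`. -/
def lastDownStar (R : ReedyStruct C) : DownStar R ⥤ C where
  obj P := (lastNeg R).obj P.obj
  map {P Q} f :=
    Quot.lift (fun f' : P.obj ⟶ Q.obj => (lastNeg R).map f')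
      (fun _ _ h => lastChain_eq_of_le h) f
  map_id P := (lastNeg R).map_id P.obj
  map_comp {P Q S} f g := by
    induction f using Quot.ind
    induction g using Quot.ind
    exact (lastNeg R).map_comp _ _

/-- The last-component functor `Down(C) → C`. -/
def lastDown (R : ReedyStruct C) : Down R ⥤ C where
  obj P := (lastStrict R).obj P.obj
  map {P Q} f :=
    Quot.lift (fun f' : P.obj ⟶ Q.obj => (lastStrict R).map f')
      (fun _ _ h => lastChain_eq_of_le h) f
  map_id P := (lastStrict R).map_id P.obj
  map_comp {P Q S} f g := by
    induction f using Quot.ind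
    induction g using Quot.ind
    exact (lastStrict R).map_comp _ _

/-- The wide subcategory `Γ₋` of `∫N^{-,+}(C)`: morphisms of the form
`(σ, id) : ([m], X ∘ σ) → ([n], X)` with `σ` surjective, i.e. morphisms whose simplicial
component is surjective and all of whose components are identities. -/
def GammaNeg (R : ReedyStruct C) {P Q : NegObj R} (f : P ⟶ Q) : Prop :=
  Function.Surjective f.1.α ∧ ∀ i, IsIdMor (f.1.θ i)

/-- The wide subcategory `Γ₊` of `∫N^{-,+}(C)`: morphisms `(δ, θ)` with `δ` injective. -/
def GammaPos (R : ReedyStruct C) {P Q : NegObj R} (f : P ⟶ Q) : Prop :=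
  Function.Injective f.1.α

/-- Whiskering (precomposition) with `lastF` is bijective on natural transformations
between functors out of `C`. -/
def WhiskerUnique {Γ : Type u₁} [Category.{v₁} Γ] (lastF : Γ ⥤ C) : Prop :=
  ∀ {D : Type u₂} [Category.{v₂} D] (F G : C ⥤ D)
    (ε : lastF ⋙ F ⟶ lastF ⋙ G), ∃! ε' : F ⟶ G, Functor.whiskerLeft lastF ε' = ε

/-- `lastF : Γ ⥤ C` is a weak 1-localization of `Γ` at the `last`-weak equivalences
(the morphisms sent by `lastF` to identities). -/
def IsWeakLocalizationAtLastWeq {Γ : Type u₁} [Category.{v₁} Γ] (lastF : Γ ⥤ C) : Prop :=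
  (∀ {P Q : Γ} (f : P ⟶ Q), IsIdMor (lastF.map f) → IsIso (lastF.map f)) ∧
  (∀ {E : Type u₂} [Category.{v₂} E] (G : Γ ⥤ E),
    (∀ {P Q : Γ} (f : P ⟶ Q), IsIdMor (lastF.map f) → IsIso (G.map f)) →
    ∃ H : C ⥤ E, Nonempty (lastF ⋙ H ≅ G)) ∧
  (∀ {E : Type u₂} [Category.{v₂} E] (H H' : C ⥤ E) (θ : lastF ⋙ H ≅ lastF ⋙ H'),
    ∃! θ' : H ≅ H', Functor.isoWhiskerLeft lastF θ' = θ)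

section Aux

universe w₁ w₂

theorem finOne_elim {n : ℕ} (hn : n = 0) (i j : Fin (n + 1)) : i = j := by
  subst hn; exact Fin.ext (by omega)

/-- Generic criterion for `WhiskerUnique`. -/
theorem whiskerUnique_of_surj {Γ : Type w₁} [Category.{w₂} Γ] (lastF : Γ ⥤ C)
    (hsurj : ∀ c : C, ∃ P : Γ, lastF.obj P = c)
    (happ : ∀ {D : Type u₂} [Category.{v₂} D] (F G : C ⥤ D)
      (ε : lastF ⋙ F ⟶ lastF ⋙ G),
      ∃ app : ∀ c : C, F.obj c ⟶ G.obj c,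
        (∀ {c c' : C} (f : c ⟶ c'), F.map f ≫ app c' = app c ≫ G.map f) ∧
        ∀ P : Γ, app (lastF.obj P) = ε.app P) :
    WhiskerUnique.{v₂, u₂} lastF := by
  intro D _ F G ε
  obtain ⟨app, hnat, hcomp⟩ := happ F G ε
  refine ⟨⟨app, fun {c c'} f => hnat f⟩, NatTrans.ext (funext hcomp), ?_⟩
  intro ε'' h
  apply NatTrans.ext; funext c
  obtain ⟨P, rfl⟩ := hsurj c
  exact (congrArg (fun t : lastF ⋙ F ⟶ lastF ⋙ G => t.app P) h).trans (hcomp P).symm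

theorem whiskerUnique_comp {Γ : Type w₁} [Category.{w₂} Γ]
    {Γ' : Type u₁} [Category.{v₁} Γ']
    (L : Γ ⥤ Γ') (M : Γ' ⥤ C) (hL : ∀ Q : Γ', ∃ P : Γ, L.obj P = Q)
    (h : WhiskerUnique.{v₂, u₂} (L ⋙ M)) : WhiskerUnique.{v₂, u₂} M := by
  intro D _ F G ε
  obtain ⟨ε', hε', huniq⟩ := h F G (Functor.whiskerLeft L ε)
  refine ⟨ε', ?_, ?_⟩
  · apply NatTrans.ext; funext Q
    obtain ⟨P, rfl⟩ := hL Q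
    exact congrArg (fun t : (L ⋙ M) ⋙ F ⟶ (L ⋙ M) ⋙ G => t.app P) hε'
  · intro ε'' h''
    exact huniq ε'' (by
      apply NatTrans.ext; funext P
      exact congrArg (fun t : M ⋙ F ⟶ M ⋙ G => t.app (L.obj P)) h'')

/-- Transfer of naturality along an identification of the `last` image of a morphism. -/
theorem nat_step {Γ : Type w₁} [Category.{w₂} Γ] (l : Γ ⥤ C) {D : Type u₂}
    [Category.{v₂} D] {F G : C ⥤ D} (ε : l ⋙ F ⟶ l ⋙ G) {P Q : Γ} (a : P ⟶ Q)
    {f : l.obj P ⟶ l.obj Q} (e : l.map a = f) :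
    F.map f ≫ ε.app Q = ε.app P ≫ G.map f := by
  subst e; exact ε.naturality a

/-- The singleton chain on an object. -/
def sglC (c : C) : ChainObj C := ⟨0, (Functor.const (Fin 1)).obj c⟩

/-- The singleton chain morphism on a morphism. -/
def sglHomC {c c' : C} (f : c ⟶ c') : sglC c ⟶ sglC c' where
  α := OrderHom.id
  θ _ := f
  natural h := (Category.id_comp f).trans (Category.comp_id f).symm

theorem lastChain_sglHomC {c c' : C} (f : c ⟶ c') :
    lastChain.map (sglHomC f) = f := by
  show f ≫ ((Functor.const (Fin 1)).obj c').map _ = f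
  exact Category.comp_id f

/-- The anchor morphism from the singleton on the last object. -/
def anchorC (P : ChainObj C) : sglC (lastChain.obj P) ⟶ P where
  α := ⟨fun _ => Fin.last P.n, monotone_const⟩
  θ _ := 𝟙 _
  natural {i j} h := by
    obtain rfl : i = j := finOne_elim rfl i j
    show ((Functor.const (Fin 1)).obj _).map _ ≫ 𝟙 _ = 𝟙 _ ≫ P.X.map (homOfLE le_rfl)
    simp
    rfl

theorem lastChain_anchorC (P : ChainObj C) :
    lastChain.map (anchorC P) = 𝟙 (lastChain.obj P) := by
  show 𝟙 _ ≫ P.X.map (homOfLE _) = 𝟙 _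
  rw [Category.id_comp]
  exact P.X.map_id _

/-- The anchor argument for `∫N(C)`. -/
theorem app_anchor_chain {D : Type u₂} [Category.{v₂} D] {F G : C ⥤ D}
    (ε : lastChain ⋙ F ⟶ lastChain ⋙ G) (P : ChainObj C) :
    (ε.app (sglC (lastChain.obj P)) :
      F.obj (lastChain.obj P) ⟶ G.obj (lastChain.obj P)) = ε.app P := by
  have s := nat_step lastChain ε (anchorC P) (lastChain_anchorC P)
  exact (Category.comp_id _).symm.trans
    ((congrArg (fun t => ε.app (sglC (lastChain.obj P)) ≫ t) (G.map_id (lastChain.obj P)).symm).trans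
      (s.symm.trans ((congrArg (fun t => t ≫ ε.app P) (F.map_id (lastChain.obj P))).trans
        (Category.id_comp _))))

theorem whiskerUnique_lastChain : WhiskerUnique.{v₂, u₂} (lastChain (C := C)) := by
  refine whiskerUnique_of_surj _ (fun c => ⟨sglC c, rfl⟩) ?_
  intro D _ F G ε
  refine ⟨fun c => ε.app (sglC c), ?_, ?_⟩
  · intro c c' f
    exact nat_step lastChain ε (sglHomC f) (lastChain_sglHomC f)
  · intro P
    exact app_anchor_chain ε P

variable {R : ReedyStruct C}

/-- The singleton object of `∫N^{-,+}(C)`. -/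
def sglN (R : ReedyStruct C) (c : C) : NegObj R where
  n := 0
  X := (Functor.const (Fin 1)).obj c
  negMap h := by simpa using R.neg_id c

/-- The 2-chain object of `∫N^{-,+}(C)` on a `C₋`-morphism. -/
def twoN (R : ReedyStruct C) {c z : C} (g : c ⟶ z) (hg : R.neg g) : NegObj R where
  n := 1
  X := ComposableArrows.mk₁ g
  negMap {i j} h := by
    fin_cases i <;> fin_cases j
    · exact R.neg_id _
    · exact hg
    · exact absurd h (by decide)
    · exact R.neg_id _

/-- Singleton chain morphism with pos component, in `∫N^{-,+}(C)`. -/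
def sglHomN {c c' : C} (h : c ⟶ c') (hpos : R.pos h) : sglN R c ⟶ sglN R c' :=
  ⟨sglHomC h, fun _ => hpos⟩

/-- The morphism `sglN c ⟶ twoN g` hitting the first vertex. -/
def twoHom₀ {c z : C} (g : c ⟶ z) (hg : R.neg g) : sglN R c ⟶ twoN R g hg :=
  ⟨{ α := ⟨fun _ => 0, monotone_const⟩
     θ := fun _ => 𝟙 c
     natural := fun {i j} h => by
       obtain rfl : i = j := finOne_elim rfl i j
       exact rfl },
   fun _ => R.pos_id c⟩

/-- The morphism `sglN z ⟶ twoN g` hitting the last vertex. -/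
def twoHom₁ {c z : C} (g : c ⟶ z) (hg : R.neg g) : sglN R z ⟶ twoN R g hg :=
  ⟨{ α := ⟨fun _ => 1, monotone_const⟩
     θ := fun _ => 𝟙 z
     natural := fun {i j} h => by
       obtain rfl : i = j := finOne_elim rfl i j
       exact rfl },
   fun _ => R.pos_id z⟩

theorem lastNeg_twoHom₀ {c z : C} (g : c ⟶ z) (hg : R.neg g) :
    (lastNeg R).map (twoHom₀ g hg) = g := by
  show 𝟙 c ≫ (ComposableArrows.mk₁ g).map (homOfLE (by decide : (0 : Fin 2) ≤ 1)) = g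
  refine (Category.id_comp _).trans ?_
  rfl

theorem lastNeg_twoHom₁ {c z : C} (g : c ⟶ z) (hg : R.neg g) :
    (lastNeg R).map (twoHom₁ g hg) = 𝟙 z := by
  show 𝟙 z ≫ (ComposableArrows.mk₁ g).map (homOfLE (le_refl (1 : Fin 2))) = 𝟙 z
  refine (Category.id_comp _).trans ?_
  rfl

theorem lastNeg_sglHomN {c c' : C} (h : c ⟶ c') (hpos : R.pos h) :
    (lastNeg R).map (sglHomN h hpos) = h :=
  lastChain_sglHomC h

/-- The anchor morphism in `∫N^{-,+}(C)`. -/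
def anchorN (P : NegObj R) : sglN R ((lastNeg R).obj P) ⟶ P :=
  ⟨anchorC P.chain, fun _ => R.pos_id _⟩

theorem lastNeg_anchorN (P : NegObj R) :
    (lastNeg R).map (anchorN P) = 𝟙 ((lastNeg R).obj P) :=
  lastChain_anchorC P.chain

/-- Combination of the three naturality squares giving naturality of the candidate
components at an arbitrary morphism `g ≫ h` with `g ∈ C₋` and `h ∈ C₊`. -/
theorem comb_step {D : Type u₂} [Category.{v₂} D] (F G : C ⥤ D)
    {c z c' : C} {g : c ⟶ z} {h : z ⟶ c'}
    {A : F.obj c ⟶ G.obj c} {B : F.obj z ⟶ G.obj z} {Z : F.obj z ⟶ G.obj z}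
    {A' : F.obj c' ⟶ G.obj c'}
    (s0 : F.map g ≫ B = A ≫ G.map g)
    (s1 : F.map (𝟙 z) ≫ B = Z ≫ G.map (𝟙 z))
    (s3 : F.map h ≫ A' = Z ≫ G.map h) :
    F.map (g ≫ h) ≫ A' = A ≫ G.map (g ≫ h) := by
  have hBZ : B = Z := by
    rw [F.map_id, G.map_id, Category.id_comp, Category.comp_id] at s1
    exact s1
  subst hBZ
  rw [F.map_comp, G.map_comp, Category.assoc, s3, ← Category.assoc, s0, Category.assoc]

theorem negAppNat {D : Type u₂} [Category.{v₂} D] (F G : C ⥤ D)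
    (ε : lastNeg R ⋙ F ⟶ lastNeg R ⋙ G) {c c' : C} (f : c ⟶ c') :
    F.map f ≫ ε.app (sglN R c') = ε.app (sglN R c) ≫ G.map f := by
  obtain ⟨⟨z, g, h⟩, ⟨hg, hh, hfac⟩, -⟩ := R.factor_existsUnique f
  dsimp at hg hh hfac
  subst hfac
  exact comb_step F G
    (nat_step (lastNeg R) ε (twoHom₀ g hg) (lastNeg_twoHom₀ g hg))
    (nat_step (lastNeg R) ε (twoHom₁ g hg) (lastNeg_twoHom₁ g hg))
    (nat_step (lastNeg R) ε (sglHomN h hh) (lastNeg_sglHomN h hh))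

theorem whiskerUnique_lastNeg (R : ReedyStruct C) :
    WhiskerUnique.{v₂, u₂} (lastNeg R) := by
  refine whiskerUnique_of_surj _ (fun c => ⟨sglN R c, rfl⟩) ?_
  intro D _ F G ε
  refine ⟨fun c => ε.app (sglN R c), fun {c c'} f => negAppNat F G ε f, ?_⟩
  intro P
  have s := nat_step (lastNeg R) ε (anchorN P) (lastNeg_anchorN P)
  exact (Category.comp_id _).symm.trans
    ((congrArg (fun t => ε.app (sglN R ((lastNeg R).obj P)) ≫ t) (G.map_id ((lastNeg R).obj P)).symm).trans
      (s.symm.trans ((congrArg (fun t => t ≫ ε.app P) (F.map_id ((lastNeg R).obj P))).trans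
        (Category.id_comp _))))

/-- The singleton object of `∫N^{--,+}_+(C)`. -/
def sglS (R : ReedyStruct C) (c : C) : StrictObj R where
  toNegObj := sglN R c
  idRefl {i j} h _ := finOne_elim rfl i j

/-- The 2-chain object of `∫N^{--,+}_+(C)` on a non-identity `C₋`-morphism. -/
def twoS (R : ReedyStruct C) {c z : C} (g : c ⟶ z) (hg : R.neg g)
    (hni : ¬ IsIdMor g) : StrictObj R where
  toNegObj := twoN R g hg
  idRefl {i j} h hid := by
    rcases i with ⟨iv, hiv⟩
    rcases j with ⟨jv, hjv⟩
    have hiv' : iv < 2 := hiv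
    have hjv' : jv < 2 := hjv
    interval_cases iv <;> interval_cases jv
    · rfl
    · have e : (twoN R g hg).X.map (homOfLE h) = g := rfl
      rw [e] at hid
      exact absurd hid hni
    · exact absurd (Fin.mk_le_mk.mp h) (by omega)
    · rfl

/-- Singleton morphism in `∫N^{--,+}_+(C)`. -/
def sglHomS {c c' : C} (h : c ⟶ c') (hpos : R.pos h) : sglS R c ⟶ sglS R c' :=
  ⟨sglHomN h hpos, fun _ _ _ => finOne_elim rfl _ _⟩

def twoHomS₀ {c z : C} (g : c ⟶ z) (hg : R.neg g) (hni : ¬ IsIdMor g) :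
    sglS R c ⟶ twoS R g hg hni :=
  ⟨twoHom₀ g hg, fun _ _ _ => finOne_elim rfl _ _⟩

def twoHomS₁ {c z : C} (g : c ⟶ z) (hg : R.neg g) (hni : ¬ IsIdMor g) :
    sglS R z ⟶ twoS R g hg hni :=
  ⟨twoHom₁ g hg, fun _ _ _ => finOne_elim rfl _ _⟩

/-- The anchor morphism in `∫N^{--,+}_+(C)`. -/
def anchorS (P : StrictObj R) : sglS R ((lastStrict R).obj P) ⟶ P :=
  ⟨anchorN P.toNegObj, fun _ _ _ => finOne_elim rfl _ _⟩

theorem strictAppNat {D : Type u₂} [Category.{v₂} D] (F G : C ⥤ D)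
    (ε : lastStrict R ⋙ F ⟶ lastStrict R ⋙ G) {c c' : C} (f : c ⟶ c') :
    F.map f ≫ ε.app (sglS R c') = ε.app (sglS R c) ≫ G.map f := by
  obtain ⟨⟨z, g, h⟩, ⟨hg, hh, hfac⟩, -⟩ := R.factor_existsUnique f
  dsimp at hg hh hfac
  subst hfac
  by_cases hni : IsIdMor g
  · obtain ⟨rfl, hgeq⟩ := hni
    have s3 := nat_step (lastStrict R) ε (sglHomS h hh)
      (lastChain_sglHomC h : (lastStrict R).map (sglHomS h hh) = h)
    rw [hgeq, eqToHom_refl, Category.id_comp]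
    exact s3
  · exact comb_step F G
      (nat_step (lastStrict R) ε (twoHomS₀ g hg hni)
        (lastNeg_twoHom₀ g hg : (lastStrict R).map (twoHomS₀ g hg hni) = g))
      (nat_step (lastStrict R) ε (twoHomS₁ g hg hni)
        (lastNeg_twoHom₁ g hg : (lastStrict R).map (twoHomS₁ g hg hni) = 𝟙 z))
      (nat_step (lastStrict R) ε (sglHomS h hh)
        (lastChain_sglHomC h : (lastStrict R).map (sglHomS h hh) = h))

theorem whiskerUnique_lastStrict (R : ReedyStruct C) :
    WhiskerUnique.{v₂, u₂} (lastStrict R) := by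
  refine whiskerUnique_of_surj _ (fun c => ⟨sglS R c, rfl⟩) ?_
  intro D _ F G ε
  refine ⟨fun c => ε.app (sglS R c), fun {c c'} f => strictAppNat F G ε f, ?_⟩
  intro P
  have s := nat_step (lastStrict R) ε (anchorS P)
    (lastChain_anchorC P.toNegObj.chain :
      (lastStrict R).map (anchorS P) = 𝟙 ((lastStrict R).obj P))
  exact (Category.comp_id _).symm.trans
    ((congrArg (fun t => ε.app (sglS R ((lastStrict R).obj P)) ≫ t) (G.map_id ((lastStrict R).obj P)).symm).trans
      (s.symm.trans ((congrArg (fun t => t ≫ ε.app P) (F.map_id ((lastStrict R).obj P))).trans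
        (Category.id_comp _))))

/-- The quotient functor `∫N^{--,+}_+(C) → Down(C)`. -/
def qDown (R : ReedyStruct C) : StrictObj R ⥤ Down R where
  obj P := ⟨P⟩
  map f := Quot.mk _ f
  map_id _ := rfl
  map_comp _ _ := rfl

end Aux

section Statements

variable (R : ReedyStruct C)

theorem statement17 :
    WhiskerUnique (lastChain (C := C)) ∧ WhiskerUnique (lastNeg R) ∧
    WhiskerUnique (lastStrict R) ∧ WhiskerUnique (lastDownStar R) ∧
    WhiskerUnique (lastDown R) := by
  refine ⟨whiskerUnique_lastChain, whiskerUnique_lastNeg R, whiskerUnique_lastStrict R,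
    ?_, ?_⟩
  · exact whiskerUnique_comp (qStar R) (lastDownStar R)
      (fun Q => ⟨Q.obj, rfl⟩) (whiskerUnique_lastNeg R)
  · exact whiskerUnique_comp (qDown R) (lastDown R)
      (fun Q => ⟨Q.obj, rfl⟩) (whiskerUnique_lastStrict R)

end Statements

end ReedyPaper
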